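/- Let Ax be a set of L-formulas containing I_◇□: (◇φ → □ψ) → □(φ → ψ), and let Γ be a prime theory (w.r.t. Ax) with ◇π ∉ Γ. Let U_{Γ,π} = {Δ : Δ is a prime theory, {φ : □φ ∈ Γ} ⊆ Δ, and π ∉ Δ}. Then (Γ, U_{Γ,π}) is a segment. -/

import Mathlib

/-- Formulas of the modal language L. -/
inductive Form : Type
  | var : ℕ → Form
  | bot : Form
  | and : Form → Form → Form
  | or : Form → Form → Form
  | imp : Form → Form → Form
  | box : Form → Form
  | dia : Form → Form

namespace Form

/-- Negation abbreviation: ¬φ := φ → ⊥. -/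
def neg (φ : Form) : Form := φ.imp bot

/-- Uniform substitution. -/
def subst (σ : ℕ → Form) : Form → Form
  | var p => σ p
  | bot => bot
  | and a b => and (a.subst σ) (b.subst σ)
  | or a b => or (a.subst σ) (b.subst σ)
  | imp a b => imp (a.subst σ) (b.subst σ)
  | box a => box (a.subst σ)
  | dia a => dia (a.subst σ)

end Form

/-- Substitution instances of the axioms of a standard Hilbert axiomatisation
of intuitionistic propositional logic (the axioms are schematic, so all
substitution instances are included). -/
inductive IPLAx : Form → Prop
  | a1 (φ ψ : Form) : IPLAx (φ.imp (ψ.imp φ))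
  | a2 (φ ψ χ : Form) : IPLAx ((φ.imp (ψ.imp χ)).imp ((φ.imp ψ).imp (φ.imp χ)))
  | a3 (φ ψ : Form) : IPLAx ((φ.and ψ).imp φ)
  | a4 (φ ψ : Form) : IPLAx ((φ.and ψ).imp ψ)
  | a5 (φ ψ : Form) : IPLAx (φ.imp (ψ.imp (φ.and ψ)))
  | a6 (φ ψ : Form) : IPLAx (φ.imp (φ.or ψ))
  | a7 (φ ψ : Form) : IPLAx (ψ.imp (φ.or ψ))
  | a8 (φ ψ χ : Form) : IPLAx ((φ.imp χ).imp ((ψ.imp χ).imp ((φ.or ψ).imp χ)))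
  | a9 (φ : Form) : IPLAx (Form.bot.imp φ)

/-- Substitution instances of K_□ : □(φ→ψ) → (□φ → □ψ). -/
def KBoxAx (χ : Form) : Prop :=
  ∃ φ ψ : Form, χ = ((φ.imp ψ).box).imp ((φ.box).imp (ψ.box))

/-- Substitution instances of K_◇ : □(φ→ψ) → (◇φ → ◇ψ). -/
def KDiaAx (χ : Form) : Prop :=
  ∃ φ ψ : Form, χ = ((φ.imp ψ).box).imp ((φ.dia).imp (ψ.dia))

/-- Axiom instances available in the calculus CK ⊕ Ax : instances of IPL
axioms, of K_□, of K_◇, or substitution instances of members of Ax. -/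
def AxInst (Ax : Set Form) (φ : Form) : Prop :=
  IPLAx φ ∨ KBoxAx φ ∨ KDiaAx φ ∨ ∃ ψ ∈ Ax, ∃ σ : ℕ → Form, φ = ψ.subst σ

/-- The generalised Hilbert calculus CK ⊕ Ax deriving consecutions Γ ⊢_Ax φ:
rules (Ax), (MP), (Nec) and (El). -/
inductive Prv (Ax : Set Form) : Set Form → Form → Prop
  | ax {Γ : Set Form} {φ : Form} : AxInst Ax φ → Prv Ax Γ φ
  | mp {Γ : Set Form} {φ ψ : Form} : Prv Ax Γ φ → Prv Ax Γ (φ.imp ψ) → Prv Ax Γ ψ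
  | nec {Γ : Set Form} {φ : Form} : Prv Ax ∅ φ → Prv Ax Γ φ.box
  | el {Γ : Set Form} {φ : Form} : φ ∈ Γ → Prv Ax Γ φ

/-- A theory: a deductively closed set of formulas. -/
def Theory (Ax : Set Form) (Γ : Set Form) : Prop := ∀ φ : Form, Prv Ax Γ φ → φ ∈ Γ

/-- A set of formulas is prime if φ∨ψ ∈ Γ implies φ ∈ Γ or ψ ∈ Γ. -/
def PrimeSet (Γ : Set Form) : Prop := ∀ φ ψ : Form, φ.or ψ ∈ Γ → φ ∈ Γ ∨ ψ ∈ Γ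

/-- A prime theory (possibly inconsistent). -/
def PrimeTheory (Ax : Set Form) (Γ : Set Form) : Prop := Theory Ax Γ ∧ PrimeSet Γ

/-- (Γ, U) is a segment: Γ is a prime theory, U a set of prime theories,
□φ ∈ Γ implies φ ∈ Δ for all Δ ∈ U, and ◇φ ∈ Γ implies φ ∈ Δ for some Δ ∈ U. -/
def IsSegment (Ax : Set Form) (Γ : Set Form) (U : Set (Set Form)) : Prop :=
  PrimeTheory Ax Γ ∧ (∀ Δ ∈ U, PrimeTheory Ax Δ) ∧
  (∀ φ : Form, φ.box ∈ Γ → ∀ Δ ∈ U, φ ∈ Δ) ∧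
  (∀ φ : Form, φ.dia ∈ Γ → ∃ Δ ∈ U, φ ∈ Δ)

/-- The axiom N_◇ : ◇⊥ → ⊥. -/
def NdAx : Form := (Form.bot.dia).imp Form.bot

/-- The axiom N_◇□ : ◇⊥ → □⊥. -/
def NdbAx : Form := (Form.bot.dia).imp (Form.bot.box)

/-- The axiom C_◇ : ◇(p ∨ q) → ◇p ∨ ◇q. -/
def CdAx : Form :=
  (((Form.var 0).or (Form.var 1)).dia).imp (((Form.var 0).dia).or ((Form.var 1).dia))

/-- The axiom I_◇□ : (◇p → □q) → □(p → q). -/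
def IdbAx : Form :=
  (((Form.var 0).dia).imp ((Form.var 1).box)).imp (((Form.var 0).imp (Form.var 1)).box)

namespace PSegAux

variable {Ax : Set Form}

lemma mono {Γ Γ' : Set Form} {φ : Form} (h : Prv Ax Γ φ) (hs : Γ ⊆ Γ') :
    Prv Ax Γ' φ := by
  induction h generalizing Γ' with
  | ax h => exact Prv.ax h
  | mp _ _ ih1 ih2 => exact Prv.mp (ih1 hs) (ih2 hs)
  | nec h => exact Prv.nec h
  | el h => exact Prv.el (hs h)

lemma idd (Γ : Set Form) (φ : Form) : Prv Ax Γ (φ.imp φ) :=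
  Prv.mp (Prv.ax (Or.inl (IPLAx.a1 φ φ)))
    (Prv.mp (Prv.ax (Or.inl (IPLAx.a1 φ (φ.imp φ))))
      (Prv.ax (Or.inl (IPLAx.a2 φ (φ.imp φ) φ))))

lemma deduction_aux {Δ : Set Form} {φ : Form} (h : Prv Ax Δ φ) :
    ∀ {Γ : Set Form} {ψ : Form}, Δ = insert ψ Γ → Prv Ax Γ (ψ.imp φ) := by
  induction h with
  | ax h =>
    intro Γ ψ _
    exact Prv.mp (Prv.ax h) (Prv.ax (Or.inl (IPLAx.a1 _ ψ)))
  | mp _ _ ih1 ih2 =>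
    intro Γ ψ hΔ
    exact Prv.mp (ih1 hΔ) (Prv.mp (ih2 hΔ) (Prv.ax (Or.inl (IPLAx.a2 ψ _ _))))
  | nec h =>
    intro Γ ψ _
    exact Prv.mp (Prv.nec h) (Prv.ax (Or.inl (IPLAx.a1 _ ψ)))
  | el hmem =>
    intro Γ ψ hΔ
    subst hΔ
    rcases hmem with h | h
    · subst h; exact idd _ _
    · exact Prv.mp (Prv.el h) (Prv.ax (Or.inl (IPLAx.a1 _ ψ)))

lemma deduction {Γ : Set Form} {ψ φ : Form} (h : Prv Ax (insert ψ Γ) φ) :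
    Prv Ax Γ (ψ.imp φ) := deduction_aux h rfl

lemma finite_subproof {Γ : Set Form} {φ : Form} (h : Prv Ax Γ φ) :
    ∃ Γ₀ : Set Form, Γ₀ ⊆ Γ ∧ Γ₀.Finite ∧ Prv Ax Γ₀ φ := by
  induction h with
  | ax h => exact ⟨∅, by simp, Set.finite_empty, Prv.ax h⟩
  | mp _ _ ih1 ih2 =>
    obtain ⟨A, hA, hAf, pA⟩ := ih1
    obtain ⟨B, hB, hBf, pB⟩ := ih2
    exact ⟨A ∪ B, Set.union_subset hA hB, hAf.union hBf,
      Prv.mp (mono pA Set.subset_union_left) (mono pB Set.subset_union_right)⟩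
  | nec h => exact ⟨∅, by simp, Set.finite_empty, Prv.nec h⟩
  | @el _ φ hm =>
    exact ⟨{φ}, Set.singleton_subset_iff.2 hm, Set.finite_singleton _, Prv.el rfl⟩

lemma box_lift {Γ : Set Form} (hΓ : Theory Ax Γ) {S : Set Form} {χ : Form}
    (h : Prv Ax S χ) : (∀ ψ ∈ S, ψ.box ∈ Γ) → χ.box ∈ Γ := by
  induction h with
  | ax hax => exact fun _ => hΓ _ (Prv.nec (Prv.ax hax))
  | @mp _ α χ _ _ ih1 ih2 =>
    intro hS
    exact hΓ _ (Prv.mp (Prv.el (ih1 hS))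
      (Prv.mp (Prv.el (ih2 hS)) (Prv.ax (Or.inr (Or.inl ⟨α, χ, rfl⟩)))))
  | nec h => exact fun _ => hΓ _ (Prv.nec (Prv.nec h))
  | el hm => exact fun hS => hS _ hm

lemma lindenbaum {Δ₀ : Set Form} {π : Form} (h : ¬ Prv Ax Δ₀ π) :
    ∃ Δ : Set Form, Δ₀ ⊆ Δ ∧ PrimeTheory Ax Δ ∧ π ∉ Δ := by
  have hchainub : ∀ c ⊆ {Δ : Set Form | ¬ Prv Ax Δ π}, IsChain (· ⊆ ·) c →
      c.Nonempty → ∃ ub ∈ {Δ : Set Form | ¬ Prv Ax Δ π}, ∀ s ∈ c, s ⊆ ub := by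
    rintro c hc hchain ⟨y, hy⟩
    refine ⟨⋃₀ c, ?_, fun s hs => Set.subset_sUnion_of_mem hs⟩
    intro hp
    obtain ⟨F, hFsub, hFfin, hFp⟩ := finite_subproof hp
    have : ∃ Δ ∈ c, F ⊆ Δ := by
      refine Set.Finite.induction_on (motive := fun s _ => s ⊆ ⋃₀ c → ∃ Δ ∈ c, s ⊆ Δ)
        F hFfin ?_ ?_ (fun x hx => hFsub hx)
      · exact fun _ => ⟨y, hy, by simp⟩
      · rintro a s _ _ ih hsub
        obtain ⟨Δ, hΔc, hsΔ⟩ := ih (fun x hx => hsub (Set.mem_insert_of_mem a hx))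
        obtain ⟨Δ', hΔ'c, haΔ'⟩ := hsub (Set.mem_insert a s)
        rcases hchain.total hΔc hΔ'c with hle | hle
        · exact ⟨Δ', hΔ'c, Set.insert_subset haΔ' (hsΔ.trans hle)⟩
        · exact ⟨Δ, hΔc, Set.insert_subset (hle haΔ') hsΔ⟩
    obtain ⟨Δ, hΔc, hFΔ⟩ := this
    exact hc hΔc (mono hFp hFΔ)
  obtain ⟨Δ, hΔ₀Δ, hmax⟩ := zorn_subset_nonempty
      {Δ : Set Form | ¬ Prv Ax Δ π} hchainub Δ₀ h
  · have hnp : ¬ Prv Ax Δ π := hmax.1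
    -- any strict superset proves π
    have key : ∀ φ : Form, φ ∉ Δ → Prv Ax (insert φ Δ) π := by
      intro φ hφ
      by_contra hc
      exact hφ (hmax.2 hc (Set.subset_insert φ Δ) (Set.mem_insert φ Δ))
    have hthy : Theory Ax Δ := by
      intro φ hφ
      by_contra hφn
      exact hnp (Prv.mp hφ (deduction (key φ hφn)))
    refine ⟨Δ, hΔ₀Δ, ⟨hthy, ?_⟩, fun hπΔ => hnp (Prv.el hπΔ)⟩
    intro φ ψ hor
    by_contra hc
    push_neg at hc
    have h1 : Prv Ax Δ (φ.imp π) := deduction (key φ hc.1)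
    have h2 : Prv Ax Δ (ψ.imp π) := deduction (key ψ hc.2)
    have h3 : Prv Ax Δ ((φ.imp π).imp ((ψ.imp π).imp ((φ.or ψ).imp π))) :=
      Prv.ax (Or.inl (IPLAx.a8 φ ψ π))
    exact hnp (Prv.mp (Prv.el hor) (Prv.mp h2 (Prv.mp h1 h3)))

end PSegAux

/-- If I_◇□ ∈ Ax, Γ is a prime theory and ◇π ∉ Γ, then
(Γ, U_{Γ,π}) is a segment, where U_{Γ,π} is the set of prime theories
containing {φ : □φ ∈ Γ} and avoiding π. -/
theorem p_segment (Ax : Set Form) (hIdb : IdbAx ∈ Ax) (Γ : Set Form)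
    (hΓ : PrimeTheory Ax Γ) (π : Form) (hπ : π.dia ∉ Γ) :
    IsSegment Ax Γ
      {Δ : Set Form | PrimeTheory Ax Δ ∧ (∀ φ : Form, φ.box ∈ Γ → φ ∈ Δ) ∧ π ∉ Δ} := by
  open PSegAux in
  refine ⟨hΓ, fun Δ hΔ => hΔ.1, fun φ hφ Δ hΔ => hΔ.2.1 φ hφ, ?_⟩
  intro φ hφ
  set S : Set Form := {ψ | ψ.box ∈ Γ} with hSdef
  have hnp : ¬ Prv Ax (insert φ S) π := by
    intro hp
    have h1 : Prv Ax S (φ.imp π) := deduction hp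
    have h2 : (φ.imp π).box ∈ Γ := box_lift hΓ.1 h1 (fun ψ hψ => hψ)
    have h3 : π.dia ∈ Γ := hΓ.1 _ (Prv.mp (Prv.el hφ)
      (Prv.mp (Prv.el h2) (Prv.ax (Or.inr (Or.inr (Or.inl ⟨φ, π, rfl⟩))))))
    exact hπ h3
  obtain ⟨Δ, hsub, hprime, hπΔ⟩ := lindenbaum hnp
  exact ⟨Δ, ⟨hprime, fun ψ hψ => hsub (Set.mem_insert_of_mem φ hψ), hπΔ⟩,
    hsub (Set.mem_insert φ S)⟩
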